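/- arXiv:2103.09549 — 2 statements merged into one kernel-verified Lean document; each statement's English description precedes it below -/
import Mathlib

section
/- Let D be a triangulated category with shift functor Σ, let t₁ = (T₁,F₁) and t₂ = (T₂,F₂) be s-torsion pairs in D with T₁ ⊆ T₂, and set H = T₂ ∩ F₁. If (T,F) is an s-torsion pair in D with T₁ ⊆ T ⊆ T₂, then the pair (T ∩ F₁, T₂ ∩ F) is an s-torsion pair in H; that is, both classes are contained in H, every object H₀ ∈ H fits into a distinguished triangle X → H₀ → Y → ΣX with X ∈ T ∩ F₁ and Y ∈ T₂ ∩ F, Hom_D(X,Y) = 0 and Hom_D(X, Σ⁻¹Y) = 0 for all X ∈ T ∩ F₁ and Y ∈ T₂ ∩ F. -/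
open CategoryTheory Limits Pretriangulated

universe v u

variable (D : Type u) [Category.{v} D] [HasZeroObject D] [HasShift D ℤ]
  [Preadditive D] [∀ n : ℤ, (shiftFunctor D n).Additive] [Pretriangulated D]

/-- A class of objects closed under isomorphisms. -/
def IsoClosed (S : Set D) : Prop := ∀ ⦃X Y : D⦄, (X ≅ Y) → X ∈ S → Y ∈ S

/-- (STP1): every object sits in a distinguished triangle with first term in `T`
and third term in `F`. -/
def STP1 (T F : Set D) : Prop :=
  ∀ X : D, ∃ (A B : D) (f : A ⟶ X) (g : X ⟶ B) (h : B ⟶ A⟦(1 : ℤ)⟧),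
    Triangle.mk f g h ∈ (distTriang D) ∧ A ∈ T ∧ B ∈ F

/-- (STP2): `Hom(T, F) = 0`. -/
def STP2 (T F : Set D) : Prop :=
  ∀ A ∈ T, ∀ B ∈ F, ∀ f : A ⟶ B, f = 0

/-- (STP3): `Hom(T, Σ⁻¹ F) = 0`. -/
def STP3 (T F : Set D) : Prop :=
  ∀ A ∈ T, ∀ B ∈ F, ∀ f : A ⟶ B⟦(-1 : ℤ)⟧, f = 0

/-- An `s`-torsion pair in a triangulated category: a pair of iso-closed classes
satisfying (STP1), (STP2) and (STP3). -/
def IsSTorsionPair (T F : Set D) : Prop :=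
  IsoClosed D T ∧ IsoClosed D F ∧ STP1 D T F ∧ STP2 D T F ∧ STP3 D T F



/-- Auxiliary: STP3 also kills morphisms `A⟦1⟧ ⟶ B`. -/
lemma stp3_shift {T F : Set D} (h3 : STP3 D T F) {A B : D} (hA : A ∈ T) (hB : B ∈ F)
    (ψ : A⟦(1 : ℤ)⟧ ⟶ B) : ψ = 0 := by
  set e := shiftFunctorCompIsoId D (1 : ℤ) (-1 : ℤ) (by norm_num) with he
  have hφ : e.inv.app A ≫ (shiftFunctor D (-1 : ℤ)).map ψ = 0 :=
    h3 A hA B hB (e.inv.app A ≫ (shiftFunctor D (-1 : ℤ)).map ψ)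
  have hmap : (shiftFunctor D (-1 : ℤ)).map ψ = 0 := by
    have : (shiftFunctor D (-1 : ℤ)).map ψ =
        e.hom.app A ≫ (e.inv.app A ≫ (shiftFunctor D (-1 : ℤ)).map ψ) := by
      rw [← Category.assoc, Iso.hom_inv_id_app, Category.id_comp]
    rw [this, hφ, comp_zero]
  exact ((shiftFunctor D (-1 : ℤ)).map_eq_zero_iff).1 hmap

/-- Auxiliary: in an `s`-torsion pair, `F` is the right `Hom`-orthogonal of `T`. -/
lemma mem_free_of_orth {T F : Set D} (h : IsSTorsionPair D T F) (X : D)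
    (hX : ∀ A ∈ T, ∀ f : A ⟶ X, f = 0) : X ∈ F := by
  obtain ⟨hTiso, hFiso, hstp1, hstp2, hstp3⟩ := h
  obtain ⟨A, B, f, g, δ, hdt, hA, hB⟩ := hstp1 X
  have hf : f = 0 := hX A hA f
  -- use the inverse rotation to see that `𝟙 A` factors through `B⟦-1⟧`
  have hdt' := inv_rot_of_distTriang _ hdt
  obtain ⟨v, hv⟩ := Triangle.coyoneda_exact₂ _ hdt' (𝟙 A)
    (by change 𝟙 A ≫ f = 0; rw [Category.id_comp, hf])
  have hv0 : v = 0 := hstp3 A hA B hB v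
  have hidA : 𝟙 A = 0 := by rw [hv, hv0, zero_comp]; rfl
  have hZA : IsZero A := by rwa [IsZero.iff_id_eq_zero]
  have : IsIso g := by
    have := (Triangle.isZero₁_iff_isIso₂ _ hdt).1 hZA
    exact this
  exact hFiso (asIso g).symm hB

/-- Auxiliary: in an `s`-torsion pair, `T` is the left `Hom`-orthogonal of `F`. -/
lemma mem_tors_of_orth {T F : Set D} (h : IsSTorsionPair D T F) (X : D)
    (hX : ∀ B ∈ F, ∀ f : X ⟶ B, f = 0) : X ∈ T := by
  obtain ⟨hTiso, hFiso, hstp1, hstp2, hstp3⟩ := h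
  obtain ⟨A, B, f, g, δ, hdt, hA, hB⟩ := hstp1 X
  have hg : g = 0 := hX B hB g
  have hdt' := rot_of_distTriang _ hdt
  obtain ⟨ψ, hψ⟩ := Triangle.yoneda_exact₂ _ hdt' (𝟙 B)
    (by change g ≫ 𝟙 B = 0; rw [Category.comp_id, hg])
  have hψ0 : ψ = 0 := stp3_shift D hstp3 hA hB ψ
  have hidB : 𝟙 B = 0 := by rw [hψ, hψ0, comp_zero]; rfl
  have hZB : IsZero B := by rwa [IsZero.iff_id_eq_zero]
  have : IsIso f := (Triangle.isZero₃_iff_isIso₁ _ hdt).1 hZB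
  exact hTiso (asIso f) hA

/-- the map `Φ` is well defined.
Let `t₁ = (T₁, F₁) ≤ t₂ = (T₂, F₂)` be `s`-torsion pairs in `D` and `H = T₂ ∩ F₁` the heart
of the interval.  If `(T, F)` is an `s`-torsion pair with `T₁ ⊆ T ⊆ T₂`, then
`(T ∩ F₁, T₂ ∩ F)` is an `s`-torsion pair in `H`: both classes are contained in `H`,
every object of `H` sits in a distinguished triangle with first term in `T ∩ F₁` and third
term in `T₂ ∩ F`, and the pair satisfies the `Hom`-vanishing conditions (STP2) and (STP3). -/
theorem stmt5 (T₁ F₁ T₂ F₂ T F : Set D)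
    (h₁ : IsSTorsionPair D T₁ F₁) (h₂ : IsSTorsionPair D T₂ F₂)
    (h : IsSTorsionPair D T F)
    (h12 : T₁ ⊆ T₂) (hl : T₁ ⊆ T) (hr : T ⊆ T₂) :
    T ∩ F₁ ⊆ T₂ ∩ F₁ ∧
    T₂ ∩ F ⊆ T₂ ∩ F₁ ∧
    (∀ H₀ ∈ T₂ ∩ F₁, ∃ (X Y : D) (f : X ⟶ H₀) (g : H₀ ⟶ Y) (δ : Y ⟶ X⟦(1 : ℤ)⟧),
      Triangle.mk f g δ ∈ (distTriang D) ∧ X ∈ T ∩ F₁ ∧ Y ∈ T₂ ∩ F) ∧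
    STP2 D (T ∩ F₁) (T₂ ∩ F) ∧
    STP3 D (T ∩ F₁) (T₂ ∩ F) := by
  classical
  -- `F ⊆ F₁`
  have hFF₁ : F ⊆ F₁ := by
    intro X hX
    exact mem_free_of_orth D h₁ X (fun A hA f => h.2.2.2.1 A (hl hA) X hX f)
  refine ⟨fun Z hZ => ⟨hr hZ.1, hZ.2⟩, fun Z hZ => ⟨hZ.1, hFF₁ hZ.2⟩, ?_, ?_, ?_⟩
  · intro H₀ hH₀
    obtain ⟨X, Y, f, g, δ, hdt, hX, hY⟩ := h.2.2.1 H₀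
    refine ⟨X, Y, f, g, δ, hdt, ⟨hX, ?_⟩, ⟨?_, hY⟩⟩
    · -- X ∈ F₁
      refine mem_free_of_orth D h₁ X (fun A hA u => ?_)
      have huf : u ≫ f = 0 := h₁.2.2.2.1 A hA H₀ hH₀.2 (u ≫ f)
      have hdt' := inv_rot_of_distTriang _ hdt
      obtain ⟨v, hv⟩ := Triangle.coyoneda_exact₂ _ hdt' u (by change u ≫ f = 0; rw [huf])
      have hv0 : v = 0 := h.2.2.2.2 A (hl hA) Y hY v
      rw [hv, hv0, zero_comp]; rfl
    · -- Y ∈ T₂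
      refine mem_tors_of_orth D h₂ Y (fun B hB w => ?_)
      have hgw : g ≫ w = 0 := h₂.2.2.2.1 H₀ hH₀.1 B hB (g ≫ w)
      have hdt' := rot_of_distTriang _ hdt
      obtain ⟨ψ, hψ⟩ := Triangle.yoneda_exact₂ _ hdt' w (by change g ≫ w = 0; rw [hgw])
      have hψ0 : ψ = 0 := stp3_shift D h₂.2.2.2.2 (hr hX) hB ψ
      rw [hψ, hψ0, comp_zero]; rfl
  · intro A hA B hB f
    exact h.2.2.2.1 A hA.1 B hB.2 f
  · intro A hA B hB f
    exact h.2.2.2.2 A hA.1 B hB.2 f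
end

section
/- Let D be a triangulated category with shift functor Σ, let t₁ = (T₁,F₁) and t₂ = (T₂,F₂) be s-torsion pairs in D with T₁ ⊆ T₂, and set H = T₂ ∩ F₁. Suppose (X,Y) is a pair of subclasses of H such that every object H₀ ∈ H fits into a distinguished triangle X → H₀ → Y → ΣX with X ∈ X and Y ∈ Y, and Hom_D(X,Y) = 0 and Hom_D(X, Σ⁻¹Y) = 0 for all X ∈ X and Y ∈ Y. Then (T₁∗X, Y∗F₂) is an s-torsion pair in D satisfying T₁ ⊆ T₁∗X ⊆ T₂, where T₁∗X denotes the class of objects M admitting a distinguished triangle U → M → X → ΣU with U ∈ T₁ and X ∈ X, and Y∗F₂ denotes the class of objects M admitting a distinguished triangle Y → M → V → ΣY with Y ∈ Y and V ∈ F₂. -/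
open CategoryTheory Limits Pretriangulated

universe v u

variable (D : Type u) [Category.{v} D] [HasZeroObject D] [HasShift D ℤ]
  [Preadditive D] [∀ n : ℤ, (shiftFunctor D n).Additive] [Pretriangulated D]

/-- `star X Y` is the class of objects `M` admitting a distinguished triangle
`A → M → B → ΣA` with `A ∈ X` and `B ∈ Y`. -/
def star (X Y : Set D) : Set D :=
  {M : D | ∃ (A B : D) (f : A ⟶ M) (g : M ⟶ B) (h : B ⟶ A⟦(1 : ℤ)⟧),
    Triangle.mk f g h ∈ (distTriang D) ∧ A ∈ X ∧ B ∈ Y}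

section Aux

set_option linter.unusedSectionVars false

variable {D}

/-- If all maps `A ⟶ B⟦-1⟧` vanish, then all maps `A⟦1⟧ ⟶ B` vanish. -/
lemma shift_hom_zero {A B : D} (h : ∀ f : A ⟶ B⟦(-1 : ℤ)⟧, f = 0)
    (g : A⟦(1 : ℤ)⟧ ⟶ B) : g = 0 := by
  have h1 : (shiftFunctorCompIsoId D (1 : ℤ) (-1 : ℤ) (by norm_num)).inv.app A ≫
      (shiftFunctor D (-1 : ℤ)).map g = 0 := h _
  have h2 : (shiftFunctor D (-1 : ℤ)).map g = 0 := by
    have h3 : (shiftFunctorCompIsoId D (1 : ℤ) (-1 : ℤ) (by norm_num)).hom.app A ≫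
        ((shiftFunctorCompIsoId D (1 : ℤ) (-1 : ℤ) (by norm_num)).inv.app A ≫
          (shiftFunctor D (-1 : ℤ)).map g) =
        (shiftFunctor D (-1 : ℤ)).map g := by
      rw [← Category.assoc, Iso.hom_inv_id_app, Category.id_comp]
    rw [h1, comp_zero] at h3
    exact h3.symm
  apply (shiftFunctor D (-1 : ℤ)).map_injective
  rw [h2, Functor.map_zero]

lemma vanContra₂ {T : Triangle D} (hT : T ∈ distTriang D) {Z : D}
    (h₁ : ∀ f : T.obj₁ ⟶ Z, f = 0) (h₃ : ∀ f : T.obj₃ ⟶ Z, f = 0)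
    (f : T.obj₂ ⟶ Z) : f = 0 := by
  obtain ⟨g, hg⟩ := Triangle.yoneda_exact₂ T hT f (h₁ _)
  rw [hg, h₃ g, comp_zero]

lemma vanContra₃ {T : Triangle D} (hT : T ∈ distTriang D) {Z : D}
    (h₂ : ∀ f : T.obj₂ ⟶ Z, f = 0) (h₁ : ∀ f : T.obj₁ ⟶ Z⟦(-1 : ℤ)⟧, f = 0)
    (f : T.obj₃ ⟶ Z) : f = 0 := by
  obtain ⟨g, hg⟩ := Triangle.yoneda_exact₃ T hT f (h₂ _)
  rw [hg, shift_hom_zero h₁ g, comp_zero]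

lemma vanCo₂ {T : Triangle D} (hT : T ∈ distTriang D) {S : D}
    (h₁ : ∀ f : S ⟶ T.obj₁, f = 0) (h₃ : ∀ f : S ⟶ T.obj₃, f = 0)
    (f : S ⟶ T.obj₂) : f = 0 := by
  obtain ⟨g, hg⟩ := Triangle.coyoneda_exact₂ T hT f (h₃ _)
  rw [hg, h₁ g, zero_comp]

lemma vanCo₁ {T : Triangle D} (hT : T ∈ distTriang D) {S : D}
    (h₂ : ∀ f : S ⟶ T.obj₂, f = 0) (h₃ : ∀ f : S ⟶ T.obj₃⟦(-1 : ℤ)⟧, f = 0)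
    (f : S ⟶ T.obj₁) : f = 0 := by
  obtain ⟨g, hg⟩ : ∃ g : S ⟶ T.obj₃⟦(-1 : ℤ)⟧, f = g ≫ T.invRotate.mor₁ :=
    Triangle.coyoneda_exact₂ T.invRotate (inv_rot_of_distTriang T hT)
    f (h₂ _)
  rw [hg, h₃ g]
  exact zero_comp

/-- The key contravariant chase: if `N ⟶ C ⟶ Y₀ ⟶ ΣN` is distinguished, where the
middle map is the composite `C ⟶ G ⟶ Y₀` through two distinguished triangles
`A ⟶ C ⟶ G ⟶ ΣA` and `X₀ ⟶ G ⟶ Y₀ ⟶ ΣX₀`, and `Hom(A,Z) = Hom(X₀,Z) = 0`,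
then `Hom(N,Z) = 0`. -/
lemma lemmaC {A C G X₀ Y₀ N Z : D}
    {a : A ⟶ C} {b : C ⟶ G} {c₃ : G ⟶ A⟦(1 : ℤ)⟧}
    {x : X₀ ⟶ G} {p : G ⟶ Y₀} {q : Y₀ ⟶ X₀⟦(1 : ℤ)⟧}
    {ν : N ⟶ C} {δ : Y₀ ⟶ N⟦(1 : ℤ)⟧}
    (hT1 : Triangle.mk a b c₃ ∈ distTriang D)
    (hT2 : Triangle.mk x p q ∈ distTriang D)
    (hT3 : Triangle.mk ν (b ≫ p) δ ∈ distTriang D)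
    (hA : ∀ f : A ⟶ Z, f = 0) (hX : ∀ f : X₀ ⟶ Z, f = 0)
    (u : N ⟶ Z) : u = 0 := by
  have h23 : (b ≫ p) ≫ δ = 0 := comp_distTriang_mor_zero₂₃ _ hT3
  obtain ⟨g, hg⟩ : ∃ g : A⟦(1 : ℤ)⟧ ⟶ N⟦(1 : ℤ)⟧, p ≫ δ = c₃ ≫ g :=
    Triangle.yoneda_exact₃ _ hT1 (p ≫ δ)
    (show b ≫ p ≫ δ = 0 by rw [← Category.assoc, h23])
  replace hg : p ≫ δ = c₃ ≫ g := hg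
  obtain ⟨w, rfl⟩ := (shiftFunctor D (1 : ℤ)).map_surjective g
  have hv : δ ≫ u⟦(1 : ℤ)⟧' = 0 := by
    obtain ⟨g₂, hg₂⟩ : ∃ g₂ : X₀⟦(1 : ℤ)⟧ ⟶ Z⟦(1 : ℤ)⟧, δ ≫ u⟦(1 : ℤ)⟧' = q ≫ g₂ :=
      Triangle.yoneda_exact₃ _ hT2 (δ ≫ u⟦(1 : ℤ)⟧')
      (show p ≫ δ ≫ u⟦(1 : ℤ)⟧' = 0 by
        rw [← Category.assoc, hg, Category.assoc, ← Functor.map_comp, hA (w ≫ u),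
          Functor.map_zero, comp_zero])
    replace hg₂ : δ ≫ u⟦(1 : ℤ)⟧' = q ≫ g₂ := hg₂
    obtain ⟨w₂, rfl⟩ := (shiftFunctor D (1 : ℤ)).map_surjective g₂
    rw [hg₂, hX w₂, Functor.map_zero, comp_zero]
  obtain ⟨g₃, hg₃⟩ : ∃ g₃ : C⟦(1 : ℤ)⟧ ⟶ Z⟦(1 : ℤ)⟧, u⟦(1 : ℤ)⟧' = (-(ν⟦(1 : ℤ)⟧')) ≫ g₃ :=
    Triangle.yoneda_exact₃ _ (rot_of_distTriang _ hT3) (u⟦(1 : ℤ)⟧') hv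
  obtain ⟨w₃, rfl⟩ := (shiftFunctor D (1 : ℤ)).map_surjective g₃
  replace hg₃ : u⟦(1 : ℤ)⟧' = (-(ν⟦(1 : ℤ)⟧')) ≫ w₃⟦(1 : ℤ)⟧' := hg₃
  have hu : u = -(ν ≫ w₃) := by
    apply (shiftFunctor D (1 : ℤ)).map_injective
    rw [hg₃, Functor.map_neg, Functor.map_comp]
    simp
  obtain ⟨g₄, hg₄⟩ : ∃ g₄ : G ⟶ Z, w₃ = b ≫ g₄ := Triangle.yoneda_exact₂ _ hT1 w₃ (hA _)
  replace hg₄ : w₃ = b ≫ g₄ := hg₄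
  obtain ⟨g₅, hg₅⟩ : ∃ g₅ : Y₀ ⟶ Z, g₄ = p ≫ g₅ := Triangle.yoneda_exact₂ _ hT2 g₄ (hX _)
  replace hg₅ : g₄ = p ≫ g₅ := hg₅
  have h12' : ν ≫ (b ≫ p) = 0 := comp_distTriang_mor_zero₁₂ _ hT3
  rw [hu, hg₄, hg₅, show ν ≫ b ≫ p ≫ g₅ = (ν ≫ (b ≫ p)) ≫ g₅ by
    simp only [Category.assoc], h12', zero_comp, neg_zero]

/-- The key covariant chase: if `N ⟶ M ⟶ W ⟶ ΣN` is distinguished, where the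
first map is the composite `N ⟶ C ⟶ M` through two distinguished triangles
`N ⟶ C ⟶ Y₀ ⟶ ΣN` and `C ⟶ M ⟶ F ⟶ ΣC`, and `Hom(S,Y₀) = Hom(S,F) = 0`,
then `Hom(S,W) = 0`. -/
lemma lemmaD {C M F N Y₀ W S : D}
    {c : C ⟶ M} {m : M ⟶ F} {f₃ : F ⟶ C⟦(1 : ℤ)⟧}
    {ν : N ⟶ C} {γ : C ⟶ Y₀} {δ : Y₀ ⟶ N⟦(1 : ℤ)⟧}
    {w₁ : M ⟶ W} {d : W ⟶ N⟦(1 : ℤ)⟧}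
    (hTa : Triangle.mk c m f₃ ∈ distTriang D)
    (hTb : Triangle.mk ν γ δ ∈ distTriang D)
    (hTc : Triangle.mk (ν ≫ c) w₁ d ∈ distTriang D)
    (hS1 : ∀ f : S ⟶ Y₀, f = 0) (hS2 : ∀ f : S ⟶ F, f = 0)
    (u : S ⟶ W) : u = 0 := by
  have hz : d ≫ (ν ≫ c)⟦(1 : ℤ)⟧' = 0 := comp_distTriang_mor_zero₃₁ _ hTc
  have he2 : (u ≫ d) ≫ ν⟦(1 : ℤ)⟧' = 0 := by
    obtain ⟨g, hg⟩ : ∃ g : S ⟶ F, (u ≫ d) ≫ ν⟦(1 : ℤ)⟧' = g ≫ f₃ :=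
      Triangle.coyoneda_exact₁ _ hTa ((u ≫ d) ≫ ν⟦(1 : ℤ)⟧')
      (show ((u ≫ d) ≫ ν⟦(1 : ℤ)⟧') ≫ c⟦(1 : ℤ)⟧' = 0 by
        rw [Category.assoc, ← Functor.map_comp, Category.assoc, hz, comp_zero])
    replace hg : (u ≫ d) ≫ ν⟦(1 : ℤ)⟧' = g ≫ f₃ := hg
    rw [hg, hS2 g, zero_comp]
  have he : u ≫ d = 0 := by
    obtain ⟨g, hg⟩ : ∃ g : S ⟶ Y₀, u ≫ d = g ≫ δ :=
      Triangle.coyoneda_exact₁ _ hTb (u ≫ d) he2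
    replace hg : u ≫ d = g ≫ δ := hg
    rw [hg, hS1 g, zero_comp]
  obtain ⟨v, hv⟩ : ∃ v : S ⟶ M, u = v ≫ w₁ := Triangle.coyoneda_exact₃ _ hTc u he
  replace hv : u = v ≫ w₁ := hv
  obtain ⟨v', hv'⟩ : ∃ v' : S ⟶ C, v = v' ≫ c := Triangle.coyoneda_exact₂ _ hTa v (hS2 _)
  replace hv' : v = v' ≫ c := hv'
  obtain ⟨v'', hv''⟩ : ∃ v'' : S ⟶ N, v' = v'' ≫ ν := Triangle.coyoneda_exact₂ _ hTb v' (hS1 _)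
  replace hv'' : v' = v'' ≫ ν := hv''
  have h12' : (ν ≫ c) ≫ w₁ = 0 := comp_distTriang_mor_zero₁₂ _ hTc
  calc u = v'' ≫ ((ν ≫ c) ≫ w₁) := by rw [hv, hv', hv'']; simp only [Category.assoc]
  _ = 0 := by rw [h12', comp_zero]

end Aux

open ZeroObject

/-- the map `Ψ` is well defined.
Let `t₁ = (T₁, F₁) ≤ t₂ = (T₂, F₂)` be `s`-torsion pairs in `D` and `H = T₂ ∩ F₁`.
If `(X, Y)` is an `s`-torsion pair in `H` (a pair of iso-closed subclasses of `H` such that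
every object of `H` sits in a distinguished triangle with ends in `X` and `Y`, with
`Hom(X, Y) = 0` and `Hom(X, Σ⁻¹Y) = 0`), then `(T₁ ∗ X, Y ∗ F₂)` is an `s`-torsion pair in
`D` with `T₁ ⊆ T₁ ∗ X ⊆ T₂`. -/
theorem stmt6 (T₁ F₁ T₂ F₂ : Set D)
    (h₁ : IsSTorsionPair D T₁ F₁) (h₂ : IsSTorsionPair D T₂ F₂) (h12 : T₁ ⊆ T₂)
    (X Y : Set D) (hX : X ⊆ T₂ ∩ F₁) (hY : Y ⊆ T₂ ∩ F₁)
    (hXiso : IsoClosed D X) (hYiso : IsoClosed D Y)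
    (hstp1 : ∀ H₀ ∈ T₂ ∩ F₁, ∃ (A B : D) (f : A ⟶ H₀) (g : H₀ ⟶ B) (δ : B ⟶ A⟦(1 : ℤ)⟧),
      Triangle.mk f g δ ∈ (distTriang D) ∧ A ∈ X ∧ B ∈ Y)
    (hstp2 : STP2 D X Y) (hstp3 : STP3 D X Y) :
    IsSTorsionPair D (star D T₁ X) (star D Y F₂) ∧
    T₁ ⊆ star D T₁ X ∧ star D T₁ X ⊆ T₂ := by
  obtain ⟨iT₁, iF₁, s1₁, s2₁, s3₁⟩ := h₁
  obtain ⟨iT₂, iF₂, s1₂, s2₂, s3₂⟩ := h₂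
  -- `T₂` is the left orthogonal of `F₂`
  have memT₂ : ∀ M : D, (∀ F' ∈ F₂, ∀ f : M ⟶ F', f = 0) → M ∈ T₂ := by
    intro M hM
    obtain ⟨T, F, f, g, δ, hT, hTm, hFm⟩ := s1₂ M
    have hzF : IsZero F := by
      rw [IsZero.iff_id_eq_zero]
      exact vanContra₃ hT (fun v => hM F hFm v) (fun v => s3₂ T hTm F hFm v) (𝟙 F)
    have : IsIso f := (Triangle.isZero₃_iff_isIso₁ _ hT).1 hzF
    exact iT₂ (asIso f) hTm
  -- `F₁` is the right orthogonal of `T₁`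
  have memF₁ : ∀ M : D, (∀ T ∈ T₁, ∀ f : T ⟶ M, f = 0) → M ∈ F₁ := by
    intro M hM
    obtain ⟨T, F, f, g, δ, hT, hTm, hFm⟩ := s1₁ M
    have hzT : IsZero T := by
      rw [IsZero.iff_id_eq_zero]
      exact vanCo₁ hT (fun v => hM T hTm v) (fun v => s3₁ T hTm F hFm v) (𝟙 T)
    have : IsIso g := (Triangle.isZero₁_iff_isIso₂ _ hT).1 hzT
    exact iF₁ (asIso g).symm hFm
  -- objects of `H` with no maps to `Y` lie in `X`
  have memX : ∀ B' ∈ T₂ ∩ F₁, (∀ Y'' ∈ Y, ∀ f : B' ⟶ Y'', f = 0) → B' ∈ X := by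
    intro B' hB' hBY
    obtain ⟨X₁, Y₁, x₁, p₁, q₁, hT, hX₁, hY₁⟩ := hstp1 B' hB'
    have hz : IsZero Y₁ := by
      rw [IsZero.iff_id_eq_zero]
      exact vanContra₃ hT (fun v => hBY Y₁ hY₁ v) (fun v => hstp3 X₁ hX₁ Y₁ hY₁ v) (𝟙 Y₁)
    have : IsIso x₁ := (Triangle.isZero₃_iff_isIso₁ _ hT).1 hz
    exact hXiso (asIso x₁) hX₁
  -- objects of `H` with no maps from `X` lie in `Y`
  have memY : ∀ C' ∈ T₂ ∩ F₁, (∀ X' ∈ X, ∀ f : X' ⟶ C', f = 0) → C' ∈ Y := by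
    intro C' hC' hCX
    obtain ⟨X₂, Y₂, x₂, p₂, q₂, hT, hX₂, hY₂⟩ := hstp1 C' hC'
    have hz : IsZero X₂ := by
      rw [IsZero.iff_id_eq_zero]
      exact vanCo₁ hT (fun v => hCX X₂ hX₂ v) (fun v => hstp3 X₂ hX₂ Y₂ hY₂ v) (𝟙 X₂)
    have : IsIso p₂ := (Triangle.isZero₁_iff_isIso₂ _ hT).1 hz
    exact hYiso (asIso p₂).symm hY₂
  -- membership criterion for `T₁ ∗ X`
  have memStarTX : ∀ N : D, N ∈ T₂ → (∀ Y'' ∈ Y, ∀ f : N ⟶ Y'', f = 0) →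
      N ∈ star D T₁ X := by
    intro N hN hNY
    obtain ⟨A', B', a', b', c', hT, hA', hB'⟩ := s1₁ N
    have hB'T₂ : B' ∈ T₂ := memT₂ B' (fun F' hF' u =>
      vanContra₃ hT (fun v => s2₂ N hN F' hF' v) (fun v => s3₂ A' (h12 hA') F' hF' v) u)
    have hB'X : B' ∈ X := memX B' ⟨hB'T₂, hB'⟩ (fun Y'' hY'' u =>
      vanContra₃ hT (fun v => hNY Y'' hY'' v) (fun v => s3₁ A' hA' Y'' (hY hY'').2 v) u)
    exact ⟨A', B', a', b', c', hT, hA', hB'X⟩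
  -- membership criterion for `Y ∗ F₂`
  have memStarYF : ∀ W : D, (∀ T ∈ T₁, ∀ f : T ⟶ W, f = 0) →
      (∀ X' ∈ X, ∀ f : X' ⟶ W, f = 0) → W ∈ star D Y F₂ := by
    intro W hWT hWX
    obtain ⟨C', F', c', m', f', hT, hC', hF'⟩ := s1₂ W
    have hC'F₁ : C' ∈ F₁ := memF₁ C' (fun T hTm u =>
      vanCo₁ hT (fun v => hWT T hTm v) (fun v => s3₂ T (h12 hTm) F' hF' v) u)
    have hC'Y : C' ∈ Y := memY C' ⟨hC', hC'F₁⟩ (fun X' hX' u =>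
      vanCo₁ hT (fun v => hWX X' hX' v) (fun v => s3₂ X' (hX hX').1 F' hF' v) u)
    exact ⟨C', F', c', m', f', hT, hC'Y, hF'⟩
  -- `star` classes are closed under isomorphisms
  have isoClosedStar : ∀ P Q : Set D, IsoClosed D (star D P Q) := by
    intro P Q M M' e hM
    obtain ⟨A, B, f, g, h, hT, hA, hB⟩ := hM
    refine ⟨A, B, f ≫ e.hom, e.inv ≫ g, h, ?_, hA, hB⟩
    refine isomorphic_distinguished _ hT _ ?_
    exact Triangle.isoMk _ _ (Iso.refl A) e.symm (Iso.refl B)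
      (by exact (by simp : (f ≫ e.hom) ≫ e.inv = 𝟙 A ≫ f))
      (by exact (by simp : (e.inv ≫ g) ≫ 𝟙 B = e.inv ≫ g))
      (by exact (by simp : h ≫ (𝟙 A)⟦(1 : ℤ)⟧' = 𝟙 B ≫ h))
  -- `T₁ ∗ X ⊆ T₂`
  have hstarT₂ : star D T₁ X ⊆ T₂ := by
    rintro M ⟨A, B, f, g, h, hT, hA, hB⟩
    exact memT₂ M (fun F' hF' u =>
      vanContra₂ hT (fun v => s2₂ A (h12 hA) F' hF' v) (fun v => s2₂ B (hX hB).1 F' hF' v) u)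
  -- zero object memberships
  have h0T₂ : (0 : D) ∈ T₂ := memT₂ 0 (fun F' _ f => (isZero_zero D).eq_of_src f 0)
  have h0F₁ : (0 : D) ∈ F₁ := memF₁ 0 (fun T _ f => (isZero_zero D).eq_of_tgt f 0)
  have h0X : (0 : D) ∈ X := memX 0 ⟨h0T₂, h0F₁⟩ (fun Y'' _ f => (isZero_zero D).eq_of_src f 0)
  -- `T₁ ⊆ T₁ ∗ X`
  have hT₁star : T₁ ⊆ star D T₁ X := by
    intro M hM
    exact ⟨M, 0, 𝟙 M, 0, 0, contractible_distinguished M, hM, h0X⟩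
  -- (STP2) for the new pair
  have stp2' : STP2 D (star D T₁ X) (star D Y F₂) := by
    rintro M ⟨U, X₃, u₁, u₂, u₃, hTU, hU, hX₃⟩ N' ⟨Y₃, V, v₁, v₂, v₃, hTV, hY₃, hV⟩ f
    have hMV : ∀ g : M ⟶ V, g = 0 := fun g =>
      vanContra₂ hTU (fun v => s2₂ U (h12 hU) V hV v) (fun v => s2₂ X₃ (hX hX₃).1 V hV v) g
    have hMY : ∀ g : M ⟶ Y₃, g = 0 := fun g =>
      vanContra₂ hTU (fun v => s2₁ U hU Y₃ (hY hY₃).2 v) (fun v => hstp2 X₃ hX₃ Y₃ hY₃ v) g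
    obtain ⟨g, hg⟩ : ∃ g : M ⟶ Y₃, f = g ≫ v₁ := Triangle.coyoneda_exact₂ _ hTV f (hMV _)
    rw [hg, hMY g, zero_comp]
  -- (STP3) for the new pair
  have stp3' : STP3 D (star D T₁ X) (star D Y F₂) := by
    rintro M ⟨U, X₃, u₁, u₂, u₃, hTU, hU, hX₃⟩ N' ⟨Y₃, V, v₁, v₂, v₃, hTV, hY₃, hV⟩ f
    have hMV : ∀ g : M ⟶ V⟦(-1 : ℤ)⟧, g = 0 := fun g =>
      vanContra₂ hTU (fun v => s3₂ U (h12 hU) V hV v) (fun v => s3₂ X₃ (hX hX₃).1 V hV v) g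
    have hMY : ∀ g : M ⟶ Y₃⟦(-1 : ℤ)⟧, g = 0 := fun g =>
      vanContra₂ hTU (fun v => s3₁ U hU Y₃ (hY hY₃).2 v) (fun v => hstp3 X₃ hX₃ Y₃ hY₃ v) g
    have hTV2 := inv_rot_of_distTriang _ (inv_rot_of_distTriang _ hTV)
    exact vanCo₁ hTV2 (fun v => hMV v) (fun v => hMY v) f
  -- (STP1) for the new pair
  have stp1' : STP1 D (star D T₁ X) (star D Y F₂) := by
    intro M
    obtain ⟨C, F, c, m, f₃, hTa, hC, hF⟩ := s1₂ M
    obtain ⟨A, G, a, b, c₃, hT1, hA, hG1⟩ := s1₁ C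
    have hGT₂ : G ∈ T₂ := memT₂ G (fun F' hF' u =>
      vanContra₃ hT1 (fun v => s2₂ C hC F' hF' v) (fun v => s3₂ A (h12 hA) F' hF' v) u)
    obtain ⟨X₀, Y₀, x, p, q, hT2, hX₀, hY₀⟩ := hstp1 G ⟨hGT₂, hG1⟩
    obtain ⟨N, ν, δ, hT3⟩ := distinguished_cocone_triangle₁ (b ≫ p)
    have hNT₂ : N ∈ T₂ := memT₂ N (fun F' hF' u =>
      lemmaC hT1 hT2 hT3 (fun v => s2₂ A (h12 hA) F' hF' v)
        (fun v => s2₂ X₀ (hX hX₀).1 F' hF' v) u)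
    have hNY : ∀ Y'' ∈ Y, ∀ f : N ⟶ Y'', f = 0 := fun Y'' hY'' u =>
      lemmaC hT1 hT2 hT3 (fun v => s2₁ A hA Y'' (hY hY'').2 v)
        (fun v => hstp2 X₀ hX₀ Y'' hY'' v) u
    have hNmem : N ∈ star D T₁ X := memStarTX N hNT₂ hNY
    obtain ⟨W, w₁, d, hTc⟩ := distinguished_cocone_triangle (ν ≫ c)
    have hWmem : W ∈ star D Y F₂ := memStarYF W
      (fun T hTm u => lemmaD hTa hT3 hTc (fun v => s2₁ T hTm Y₀ (hY hY₀).2 v)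
        (fun v => s2₂ T (h12 hTm) F hF v) u)
      (fun X' hX' u => lemmaD hTa hT3 hTc (fun v => hstp2 X' hX' Y₀ hY₀ v)
        (fun v => s2₂ X' (hX hX').1 F hF v) u)
    exact ⟨N, W, ν ≫ c, w₁, d, hTc, hNmem, hWmem⟩
  exact ⟨⟨isoClosedStar T₁ X, isoClosedStar Y F₂, stp1', stp2', stp3'⟩, hT₁star, hstarT₂⟩
end
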